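/- Let f ∈ ℝ[X₁,…,Xₙ] be such that f = vᵀ G v for some positive definite symmetric real matrix G, where v is the vector of monomials Xᵅ for α in a finite set A. Let ε be a rational number with 0 < ε ≤ λ/2, where λ is the smallest eigenvalue of G. Then the polynomial f − ε · Σ_{α ∈ A} X^{2α} is a sum of squares of real polynomials. -/

import Mathlib

open MvPolynomial
open scoped Matrix

/-- If `f = vᵀ G v` with `G` positive definite symmetric, `v` the vector of monomials `Xᵅ`
for `α ∈ A`, and `0 < ε ≤ λ/2` with `λ` the smallest eigenvalue of `G`, then
`f - ε·Σ_{α∈A} X^{2α}` is a sum of squares. -/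
theorem stmt2 (n : ℕ) (A : Finset (Fin n →₀ ℕ)) (f : MvPolynomial (Fin n) ℝ)
    (G : Matrix {α // α ∈ A} {α // α ∈ A} ℝ)
    (hG : G.IsHermitian) (hpd : G.PosDef)
    (hf : f = ∑ α ∈ A.attach, ∑ β ∈ A.attach,
      C (G α β) * monomial ((α : Fin n →₀ ℕ) + (β : Fin n →₀ ℕ)) (1 : ℝ))
    (lam : ℝ) (hlam : IsLeast (Set.range hG.eigenvalues) lam)
    (ε : ℚ) (hε0 : 0 < ε) (hε : (ε : ℝ) ≤ lam / 2) :
    IsSumSq (f - C (ε : ℝ) * ∑ α ∈ A, monomial (2 • α) (1 : ℝ)) := by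
  classical
  set e : ℝ := (ε : ℝ) with he
  have he0 : (0 : ℝ) < e := by rw [he]; exact_mod_cast hε0
  -- G - e • 1 is positive semidefinite
  have hsmul : e • (1 : Matrix {α // α ∈ A} {α // α ∈ A} ℝ)
      = Matrix.diagonal (fun _ => e) := by
    ext i j
    by_cases h : i = j <;> simp [Matrix.one_apply, Matrix.diagonal, h]
  have hH : Matrix.PosSemidef (G - e • 1) := by
    have hdec : G - e • 1 = (hG.eigenvectorUnitary : Matrix {α // α ∈ A} {α // α ∈ A} ℝ) *
        Matrix.diagonal (fun i => hG.eigenvalues i - e) *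
        ((hG.eigenvectorUnitary : Matrix {α // α ∈ A} {α // α ∈ A} ℝ))ᴴ := by
      have hUU : (hG.eigenvectorUnitary : Matrix {α // α ∈ A} {α // α ∈ A} ℝ) *
          star (hG.eigenvectorUnitary : Matrix {α // α ∈ A} {α // α ∈ A} ℝ) = 1 :=
        (Matrix.mem_unitaryGroup_iff).mp hG.eigenvectorUnitary.2
      have hdiag : Matrix.diagonal (fun i => hG.eigenvalues i - e)
          = Matrix.diagonal (RCLike.ofReal ∘ hG.eigenvalues)
            - Matrix.diagonal (fun _ => e) := by
        rw [← Matrix.diagonal_sub]; rfl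
      rw [hdiag, mul_sub, sub_mul]
      rw [← hsmul]
      have h2 : (hG.eigenvectorUnitary : Matrix {α // α ∈ A} {α // α ∈ A} ℝ) * (e • (1:Matrix {α // α ∈ A} {α // α ∈ A} ℝ)) *
          ((hG.eigenvectorUnitary : Matrix {α // α ∈ A} {α // α ∈ A} ℝ))ᴴ = e • (1:Matrix {α // α ∈ A} {α // α ∈ A} ℝ) := by
        rw [mul_smul_comm, mul_one, smul_mul_assoc]
        rw [show ((hG.eigenvectorUnitary : Matrix {α // α ∈ A} {α // α ∈ A} ℝ))ᴴ =
          star (hG.eigenvectorUnitary : Matrix {α // α ∈ A} {α // α ∈ A} ℝ) from rfl, hUU]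
      rw [h2, ← Matrix.star_eq_conjTranspose]
      conv_lhs => rw [hG.spectral_theorem, Unitary.conjStarAlgAut_apply]
    rw [hdec]
    refine (Matrix.posSemidef_diagonal_iff.mpr fun i => ?_).mul_mul_conjTranspose_same _
    have h1 : lam ≤ hG.eigenvalues i := hlam.2 ⟨i, rfl⟩
    have : e ≤ lam / 2 := hε
    linarith
  obtain ⟨B, hB⟩ : ∃ B : Matrix {α // α ∈ A} {α // α ∈ A} ℝ, G - e • 1 = Bᴴ * B := by
    open scoped MatrixOrder Matrix.Norms.L2Operator in
    exact CStarAlgebra.nonneg_iff_eq_star_mul_self.mp (Matrix.nonneg_iff_posSemidef.mpr hH)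
  have key : f - C e * ∑ α ∈ A, monomial (2 • α) (1 : ℝ)
      = ∑ i : {α // α ∈ A},
          (∑ α ∈ A.attach, monomial (α : Fin n →₀ ℕ) (B i α)) *
          (∑ α ∈ A.attach, monomial (α : Fin n →₀ ℕ) (B i α)) := by
    have hRHS : ∀ i : {α // α ∈ A},
        (∑ α ∈ A.attach, monomial (α : Fin n →₀ ℕ) (B i α)) *
        (∑ α ∈ A.attach, monomial (α : Fin n →₀ ℕ) (B i α))
        = ∑ α ∈ A.attach, ∑ β ∈ A.attach,
            monomial ((α : Fin n →₀ ℕ) + (β : Fin n →₀ ℕ)) (B i α * B i β) := by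
      intro i
      rw [Finset.sum_mul_sum]
      simp [monomial_mul]
    simp_rw [hRHS]
    rw [Finset.sum_comm]
    have : ∀ α ∈ A.attach, ∑ i : {α // α ∈ A}, ∑ β ∈ A.attach,
        monomial ((α : Fin n →₀ ℕ) + (β : Fin n →₀ ℕ)) (B i α * B i β)
        = ∑ β ∈ A.attach,
            monomial ((α : Fin n →₀ ℕ) + (β : Fin n →₀ ℕ)) ((G - e • 1) α β) := by
      intro α _
      rw [Finset.sum_comm]
      refine Finset.sum_congr rfl fun β _ => ?_
      rw [← map_sum (monomial _)]
      congr 1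
      have : (G - e • 1) α β = (Bᴴ * B) α β := by rw [← hB]
      rw [this, Matrix.mul_apply]
      simp [Matrix.conjTranspose_apply, mul_comm]
    rw [Finset.sum_congr rfl this]
    rw [hf, Finset.mul_sum, ← Finset.sum_attach A (fun α => C e * monomial (2 • α) (1:ℝ)),
      ← Finset.sum_sub_distrib]
    refine Finset.sum_congr rfl fun α _ => ?_
    have hδ : ∀ β : {x // x ∈ A}, (G - e • 1) α β
        = G α β - (if α = β then e else 0) := by
      intro β
      by_cases h : α = β <;> simp [Matrix.one_apply, h]
    simp_rw [hδ]
    have hsplit : ∀ β : {x // x ∈ A},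
        (monomial ((α : Fin n →₀ ℕ) + (β : Fin n →₀ ℕ))
          (G α β - (if α = β then e else 0)) : MvPolynomial (Fin n) ℝ)
        = monomial ((α : Fin n →₀ ℕ) + (β : Fin n →₀ ℕ)) (G α β)
          - monomial ((α : Fin n →₀ ℕ) + (β : Fin n →₀ ℕ)) (if α = β then e else 0) := by
      intro β; rw [← map_sub]
    simp_rw [hsplit]
    rw [Finset.sum_sub_distrib]
    congr 1
    · refine Finset.sum_congr rfl fun β _ => ?_
      rw [C_mul_monomial, mul_one]
    · have : ∀ β ∈ A.attach,
          (monomial ((α : Fin n →₀ ℕ) + (β : Fin n →₀ ℕ))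
            (if α = β then e else 0) : MvPolynomial (Fin n) ℝ)
          = if α = β then monomial ((α : Fin n →₀ ℕ) + (α : Fin n →₀ ℕ)) e else 0 := by
        intro β _
        by_cases h : α = β <;> simp [h]
      rw [Finset.sum_congr rfl this, Finset.sum_ite_eq A.attach α
        (fun _ => monomial ((α : Fin n →₀ ℕ) + (α : Fin n →₀ ℕ)) e)]
      simp [C_mul_monomial, two_smul]
  rw [key]
  exact IsSumSq.sum_mul_self _ _
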